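/- For any formal group law F over a commutative ring R and integers 0 ≤ t < j, the prime p lies in the ideal of R[[x]] generated by ⟨p^t⟩(x) and ⟨p^j⟩(x). Consequently, after inverting p, the power series ⟨p^t⟩(x) and ⟨p^j⟩(x) generate the unit ideal. -/

import Mathlib

open PowerSeries

/-- For a formal group law over a commutative ring `R` and
integers `0 ≤ t < j`, the prime `p` lies in the ideal of `R⟦x⟧` generated by
`⟨p^t⟩(x)` and `⟨p^j⟩(x)`; consequently, after inverting `p`, these two power
series generate the unit ideal.

Here `pSer j = [p^j](x)` is the `p^j`-series, `bSer j = ⟨p^j⟩(x)` with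
`⟨p^0⟩(x) = x` and `[p^j](x) = ∏_{i=0}^{j} ⟨p^i⟩(x)`.  Writing
`⟨p⟩(x) = p + f(x)` with `x ∣ f(x)`, one has `⟨p^j⟩(x) = p + f([p^{j-1}](x))`
for `j ≥ 1`; the power series `fc (j-1) = f([p^{j-1}](x))` satisfies
`[p^{j-1}](x) ∣ f([p^{j-1}](x))` since `x ∣ f(x)`. -/
theorem p_in_span_of_bracket_series {R : Type*} [CommRing R] (p : ℕ) [Fact p.Prime]
    (pSer bSer fc : ℕ → PowerSeries R)
    (hp0 : pSer 0 = PowerSeries.X)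
    (hb0 : bSer 0 = PowerSeries.X)
    (hfact : ∀ j : ℕ, pSer j = ∏ i ∈ Finset.range (j + 1), bSer i)
    (hbj : ∀ j : ℕ, 1 ≤ j → bSer j = PowerSeries.C (p : R) + fc (j - 1))
    (hfc : ∀ j : ℕ, pSer j ∣ fc j)
    (t j : ℕ) (htj : t < j) :
    ((PowerSeries.C (p : R)) ∈ Ideal.span {bSer t, bSer j}) ∧
      (Ideal.span {(PowerSeries.map (algebraMap R (Localization.Away (p : R))) (bSer t)),
          (PowerSeries.map (algebraMap R (Localization.Away (p : R))) (bSer j))} = ⊤) := by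

  have hj1 : 1 ≤ j := by omega
  have hbt_dvd : bSer t ∣ pSer (j - 1) := by
    rw [hfact]
    exact Finset.dvd_prod_of_mem _ (Finset.mem_range.mpr (by omega))
  have hdvd : bSer t ∣ fc (j - 1) := hbt_dvd.trans (hfc (j - 1))
  obtain ⟨c, hc⟩ := hdvd
  have key : PowerSeries.C (p : R) = bSer j - bSer t * c := by
    rw [hbj j hj1, hc]; ring
  have hmem : (PowerSeries.C (p : R)) ∈ Ideal.span {bSer t, bSer j} := by
    rw [key]
    exact sub_mem (Ideal.subset_span (by simp)) (Ideal.mul_mem_right _ _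
      (Ideal.subset_span (by simp)))
  refine ⟨hmem, ?_⟩
  set φ := PowerSeries.map (algebraMap R (Localization.Away (p : R)))
  have hu : IsUnit (φ (PowerSeries.C (p : R))) := by
    have : φ (PowerSeries.C (p : R)) =
        PowerSeries.C (algebraMap R (Localization.Away (p : R)) (p : R)) := by
      simp [φ]
    rw [this]
    exact (IsLocalization.Away.algebraMap_isUnit (S := Localization.Away (p : R))
      ((p : R))).map (PowerSeries.C (R := Localization.Away (p : R)))
  apply Ideal.eq_top_of_isUnit_mem _ _ hu
  rw [key]
  simp only [map_sub, map_mul]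
  exact sub_mem (Ideal.subset_span (by simp)) (Ideal.mul_mem_right _ _
    (Ideal.subset_span (by simp)))
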